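/- If (M, T) is distributed according to ℌ(x,y) = 𝔔_{α,F,C}(F(x), G(y)), then M has distribution function F, and for every n in the support of M, the conditional density of T given M = n equals c(F_α(n), G₁(t₁),…,G_d(t_d))·Π_{i=1}^d g_i(t_i); equivalently the conditional distribution function of T given M = n is t ↦ ∂₁C(F_α(n), G(t)). -/

import Mathlib

open MeasureTheory Set Filter

/-- `F(n-1)` with the convention `F(-1) = 0`. -/
noncomputable def Fm (F : ℕ → ℝ) : ℕ → ℝ := fun n => if n = 0 then 0 else F (n - 1)

/-- `F_α(n) = (1-α) F(n-1) + α F(n)`. -/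
noncomputable def Falpha (α : ℝ) (F : ℕ → ℝ) (n : ℕ) : ℝ :=
  (1 - α) * Fm F n + α * F n

/-- `⌈u⌉_{α,F} = Σ_{n ≥ 0} F_α(n) · 1_{(F(n-1), F(n)]}(u)`, with `⌈0⌉ = 0` automatic. -/
noncomputable def ceilT (α : ℝ) (F : ℕ → ℝ) (u : ℝ) : ℝ :=
  ∑' n : ℕ, Falpha α F n * Set.indicator (Set.Ioc (Fm F n) (F n)) (fun _ => (1 : ℝ)) u

/-- `𝔔_{α,F,C}(u,v) = ∫_{[0,u]×[0,v]} c(⌈s⌉_{α,F}, t) dλ^{d+1}(s,t)`,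
the distribution function of the transformed density. -/
noncomputable def Qbox (d : ℕ) (α : ℝ) (F : ℕ → ℝ) (c : ℝ → (Fin d → ℝ) → ℝ)
    (u : ℝ) (v : Fin d → ℝ) : ℝ :=
  ∫ p in (Set.Icc (0 : ℝ) u) ×ˢ (Set.Icc (0 : Fin d → ℝ) v), c (ceilT α F p.1) p.2

lemma Fm_nonneg (F : ℕ → ℝ) (hF0 : ∀ n, 0 ≤ F n) (n : ℕ) : 0 ≤ Fm F n := by
  unfold Fm; split_ifs
  · exact le_refl 0
  · exact hF0 _

lemma Fm_le_one (F : ℕ → ℝ) (hF0 : ∀ n, 0 ≤ F n) (hF1 : ∀ n, F n ≤ 1) (n : ℕ) :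
    Fm F n ≤ 1 := by
  unfold Fm; split
  · norm_num
  · exact hF1 _

lemma ceilT_eq_of_mem (α : ℝ) (F : ℕ → ℝ) (hmono : Monotone F) {n : ℕ} {s : ℝ}
    (hs : s ∈ Set.Ioc (Fm F n) (F n)) : ceilT α F s = Falpha α F n := by
  unfold ceilT
  rw [tsum_eq_single n]
  · rw [Set.indicator_of_mem hs]; ring
  · intro m hm
    rw [Set.indicator_of_notMem, mul_zero]
    intro hsm
    rcases lt_or_gt_of_ne hm with h | h
    · -- m < n
      have hn0 : n ≠ 0 := (Nat.zero_lt_of_lt h).ne'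
      have h1 : Fm F n = F (n - 1) := by simp [Fm, hn0]
      have h2 : F m ≤ F (n - 1) := hmono (Nat.le_sub_one_of_lt h)
      have := hs.1
      rw [h1] at this
      exact absurd (hsm.2.trans h2) (not_le.mpr this)
    · -- m > n
      have hm0 : m ≠ 0 := (Nat.zero_lt_of_lt h).ne'
      have h1 : Fm F m = F (m - 1) := by simp [Fm, hm0]
      have h2 : F n ≤ F (m - 1) := hmono (Nat.le_sub_one_of_lt h)
      have := hsm.1
      rw [h1] at this
      exact absurd (hs.2.trans h2) (not_le.mpr this)

lemma Falpha_mem (α : ℝ) (F : ℕ → ℝ) (hF0 : ∀ n, 0 ≤ F n) (hF1 : ∀ n, F n ≤ 1)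
    (hα : α ∈ Set.Ioc (0 : ℝ) 1) (n : ℕ) : Falpha α F n ∈ Set.Icc (0 : ℝ) 1 := by
  have h1 := Fm_nonneg F hF0 n
  have h2 := Fm_le_one F hF0 hF1 n
  have h3 := hF0 n
  have h4 := hF1 n
  obtain ⟨ha1, ha2⟩ := hα
  unfold Falpha
  constructor <;> [nlinarith; nlinarith]

lemma ceilT_mem (α : ℝ) (F : ℕ → ℝ) (hmono : Monotone F) (hF0 : ∀ n, 0 ≤ F n)
    (hF1 : ∀ n, F n ≤ 1) (hα : α ∈ Set.Ioc (0 : ℝ) 1) (s : ℝ) :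
    ceilT α F s ∈ Set.Icc (0 : ℝ) 1 := by
  by_cases h : ∃ n, s ∈ Set.Ioc (Fm F n) (F n)
  · obtain ⟨n, hn⟩ := h
    rw [ceilT_eq_of_mem α F hmono hn]
    exact Falpha_mem α F hF0 hF1 hα n
  · have hz : ∀ n : ℕ,
        Falpha α F n * Set.indicator (Set.Ioc (Fm F n) (F n)) (fun _ => (1 : ℝ)) s = 0 := by
      intro n
      rw [Set.indicator_of_notMem (fun hm => h ⟨n, hm⟩), mul_zero]
    have : ceilT α F s = 0 := by
      unfold ceilT
      rw [tsum_congr hz, tsum_zero]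
    rw [this]; norm_num

/-- if `(M, T)` is distributed according to
`ℌ(x,y) = 𝔔_{α,F,C}(F(x), G(y))`, then (i) `M` has distribution function `F`
(the first marginal of `𝔔` evaluated at `F(m)` is `F(m)`); (ii) for every `n` in the
support of `M` (i.e. `P(N=n) = F(n) − F(n−1) > 0`), the conditional density of `T` given
`M = n` equals `c(F_α(n), G₁(t₁),…,G_d(t_d))·∏ᵢ gᵢ(tᵢ)`; and (iii) equivalently the
conditional distribution function of `T` given `M = n` is `t ↦ ∂₁C(F_α(n), G(t))`,
where `∂₁C(w, v) = ∫_{[0,v]} c(w, s) ds`. -/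
theorem stmt14 (d : ℕ) (F : ℕ → ℝ) (hmono : Monotone F) (hF0 : ∀ n, 0 ≤ F n)
    (hF1 : ∀ n, F n ≤ 1) (hlim : Tendsto F atTop (nhds 1))
    (α : ℝ) (hα : α ∈ Set.Ioc (0 : ℝ) 1)
    (c : ℝ → (Fin d → ℝ) → ℝ)
    (hc_meas : Measurable (Function.uncurry c))
    (hc_nonneg : ∀ u v, 0 ≤ c u v)
    (hc_sec : ∀ u ∈ Set.Icc (0 : ℝ) 1, ∫ v in Set.Icc (0 : Fin d → ℝ) 1, c u v = 1)
    (hc_int : IntegrableOn (fun p : ℝ × (Fin d → ℝ) => c (ceilT α F p.1) p.2)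
      ((Set.Icc (0 : ℝ) 1) ×ˢ (Set.Icc (0 : Fin d → ℝ) 1)))
    (G g : Fin d → ℝ → ℝ) (hG : ∀ i x, G i x ∈ Set.Icc (0 : ℝ) 1) :
    (∀ m : ℕ, Qbox d α F c (F m) (fun _ => 1) = F m) ∧
    (∀ n : ℕ, 0 < F n - Fm F n → ∀ t : Fin d → ℝ,
      (F n - Fm F n)⁻¹ *
          (∫ s in Set.Ioc (Fm F n) (F n), c (ceilT α F s) (fun i => G i (t i))) *
          ∏ i, g i (t i) =
        c (Falpha α F n) (fun i => G i (t i)) * ∏ i, g i (t i)) ∧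
    (∀ n : ℕ, 0 < F n - Fm F n → ∀ t : Fin d → ℝ,
      (F n - Fm F n)⁻¹ *
          ∫ p in (Set.Ioc (Fm F n) (F n)) ×ˢ
              (Set.Icc (0 : Fin d → ℝ) (fun i => G i (t i))), c (ceilT α F p.1) p.2 =
        ∫ w in Set.Icc (0 : Fin d → ℝ) (fun i => G i (t i)), c (Falpha α F n) w) := by
  refine ⟨?_, ?_, ?_⟩
  · -- part (i)
    intro m
    unfold Qbox
    have h1 : (fun _ : Fin d => (1 : ℝ)) = (1 : Fin d → ℝ) := rfl
    rw [h1]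
    have hsub : (Set.Icc (0 : ℝ) (F m)) ×ˢ (Set.Icc (0 : Fin d → ℝ) 1) ⊆
        (Set.Icc (0 : ℝ) 1) ×ˢ (Set.Icc (0 : Fin d → ℝ) 1) :=
      Set.prod_mono (Set.Icc_subset_Icc_right (hF1 m)) subset_rfl
    have hint : IntegrableOn (fun p : ℝ × (Fin d → ℝ) => c (ceilT α F p.1) p.2)
        ((Set.Icc (0 : ℝ) (F m)) ×ˢ (Set.Icc (0 : Fin d → ℝ) 1)) :=
      hc_int.mono_set hsub
    rw [Measure.volume_eq_prod] at hint ⊢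
    rw [setIntegral_prod _ hint]
    have hinner : ∀ x : ℝ,
        (∫ y in Set.Icc (0 : Fin d → ℝ) 1, c (ceilT α F x) y) = 1 := fun x =>
      hc_sec _ (ceilT_mem α F hmono hF0 hF1 hα x)
    simp only [hinner]
    rw [setIntegral_const, measureReal_def, Real.volume_Icc, sub_zero, ENNReal.toReal_ofReal (hF0 m),
      smul_eq_mul, mul_one]
  · -- part (ii)
    intro n hn t
    have key : Set.EqOn (fun s => c (ceilT α F s) (fun i => G i (t i)))
        (fun _ => c (Falpha α F n) (fun i => G i (t i))) (Set.Ioc (Fm F n) (F n)) :=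
      fun s hs => by simp only; rw [ceilT_eq_of_mem α F hmono hs]
    rw [setIntegral_congr_fun measurableSet_Ioc key, setIntegral_const, measureReal_def, Real.volume_Ioc,
      ENNReal.toReal_ofReal hn.le, smul_eq_mul, ← mul_assoc,
      inv_mul_cancel₀ hn.ne', one_mul]
  · -- part (iii)
    intro n hn t
    set S := Set.Ioc (Fm F n) (F n) with hS
    set A := Set.Icc (0 : Fin d → ℝ) (fun i => G i (t i)) with hA
    have hSsub : S ⊆ Set.Icc (0 : ℝ) 1 := fun s hs =>
      ⟨((Fm_nonneg F hF0 n).trans_lt hs.1).le, hs.2.trans (hF1 n)⟩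
    have hAsub : A ⊆ Set.Icc (0 : Fin d → ℝ) 1 :=
      Set.Icc_subset_Icc_right (fun i => (hG i (t i)).2)
    have hmeasSA : MeasurableSet (S ×ˢ A) := measurableSet_Ioc.prod measurableSet_Icc
    have heq : Set.EqOn (fun p : ℝ × (Fin d → ℝ) => c (ceilT α F p.1) p.2)
        (fun p : ℝ × (Fin d → ℝ) => c (Falpha α F n) p.2) (S ×ˢ A) := fun p hp => by
      simp only; rw [ceilT_eq_of_mem α F hmono hp.1]
    have hint : IntegrableOn (fun p : ℝ × (Fin d → ℝ) => c (Falpha α F n) p.2) (S ×ˢ A) :=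
      (hc_int.mono_set (Set.prod_mono hSsub hAsub)).congr_fun heq hmeasSA
    rw [setIntegral_congr_fun hmeasSA heq]
    rw [Measure.volume_eq_prod] at hint ⊢
    rw [setIntegral_prod _ hint]
    simp only
    rw [setIntegral_const, hS, measureReal_def, Real.volume_Ioc, ENNReal.toReal_ofReal hn.le, smul_eq_mul,
      ← mul_assoc, inv_mul_cancel₀ hn.ne', one_mul]
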